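/- Let d ≥ 1 be a natural number, λ > 0, i ∈ {1,…,d}, z ∈ ℤ^d, and let φ : ℝ^d → ℝ be continuously differentiable. Set I_λ(λz) = λz + [0,λ)^d and I_λ(λ(z+e_i)) = λ(z+e_i) + [0,λ)^d, and let m₁ = λ^{−d}·∫_{I_λ(λz)} φ(x) dx and m₂ = λ^{−d}·∫_{I_λ(λ(z+e_i))} φ(x) dx be the averages of φ over these cubes. Then d_{S¹}(exp(ι·m₂), exp(ι·m₁)) ≤ λ^{1−d}·∫₀¹ ∫_{I_λ(λz)} |∂_i φ(x + tλe_i)| dx dt. -/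

import Mathlib

open MeasureTheory

/-- The geodesic distance on the unit circle `S¹ ⊂ ℂ`:
`d_{S¹}(u,v) = arccos(Re(conj(u)·v))`, the angle in `[0,π]` between `u` and `v`. -/
noncomputable def dS1 (u v : ℂ) : ℝ :=
  Real.arccos (((starRingEnd ℂ) u * v).re)

private lemma arccos_cos_le_abs (x : ℝ) : Real.arccos (Real.cos x) ≤ |x| := by
  rcases le_or_gt |x| Real.pi with h | h
  · rw [← Real.cos_abs, Real.arccos_cos (abs_nonneg x) h]
  · exact (Real.arccos_le_pi _).trans h.le

/-- Estimate (eq:estimate on good cubes) of Step 4 of Proposition 4.2: the geodesic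
distance between `exp(ι·m₂)` and `exp(ι·m₁)`, where `m₁, m₂` are the averages of a lifting
`φ` over two adjacent cubes `I_λ(λz)`, `I_λ(λ(z+e_i))` of the grid `λℤ^d`, is controlled
by the averaged partial derivative `∂_i φ`. -/
theorem geodesic_avg_estimate (d : ℕ) (hd : 1 ≤ d) (lam : ℝ) (hlam : 0 < lam)
    (i : Fin d) (z : Fin d → ℤ) (φ : EuclideanSpace ℝ (Fin d) → ℝ) (hφ : ContDiff ℝ 1 φ)
    (I₁ I₂ : Set (EuclideanSpace ℝ (Fin d)))
    (hI₁ : I₁ = {x : EuclideanSpace ℝ (Fin d) |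
        ∀ l, lam * (z l : ℝ) ≤ x l ∧ x l < lam * (z l : ℝ) + lam})
    (hI₂ : I₂ = {x : EuclideanSpace ℝ (Fin d) |
        ∀ l, lam * ((z l : ℝ) + (if l = i then 1 else 0)) ≤ x l ∧
          x l < lam * ((z l : ℝ) + (if l = i then 1 else 0)) + lam})
    (m₁ m₂ : ℝ)
    (hm₁ : m₁ = lam ^ (-(d : ℤ)) * ∫ x in I₁, φ x)
    (hm₂ : m₂ = lam ^ (-(d : ℤ)) * ∫ x in I₂, φ x) :
    dS1 (Complex.exp (Complex.I * m₂)) (Complex.exp (Complex.I * m₁)) ≤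
      lam ^ ((1 : ℤ) - (d : ℤ)) *
        ∫ t in (0 : ℝ)..1, ∫ x in I₁,
          |fderiv ℝ φ (x + (t * lam) • EuclideanSpace.single i (1 : ℝ))
            (EuclideanSpace.single i (1 : ℝ))| := by
  set e : EuclideanSpace ℝ (Fin d) := EuclideanSpace.single i (1 : ℝ) with he
  set v : EuclideanSpace ℝ (Fin d) := lam • e with hv
  -- Step A: the geodesic distance is bounded by |m₂ - m₁|
  have hA : dS1 (Complex.exp (Complex.I * m₂)) (Complex.exp (Complex.I * m₁)) ≤ |m₂ - m₁| := by
    have hprod : (starRingEnd ℂ) (Complex.exp (Complex.I * m₂)) * Complex.exp (Complex.I * m₁)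
        = Complex.exp (((m₁ - m₂ : ℝ) : ℂ) * Complex.I) := by
      rw [← Complex.exp_conj, ← Complex.exp_add]
      congr 1
      rw [map_mul, Complex.conj_I, Complex.conj_ofReal]
      push_cast
      ring
    rw [dS1, hprod, Complex.exp_ofReal_mul_I_re]
    calc Real.arccos (Real.cos (m₁ - m₂)) ≤ |m₁ - m₂| := arccos_cos_le_abs _
      _ = |m₂ - m₁| := abs_sub_comm _ _
  -- basic continuity facts
  have hφc : Continuous φ := hφ.continuous
  have hder : Continuous (fderiv ℝ φ) := hφ.continuous_fderiv one_ne_zero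
  have hcont : Continuous (fun p : EuclideanSpace ℝ (Fin d) × ℝ => (fderiv ℝ φ (p.1 + (p.2 * lam) • e)) e) := by
    have h1 : Continuous (fun p : EuclideanSpace ℝ (Fin d) × ℝ => p.1 + (p.2 * lam) • e) :=
      continuous_fst.add ((continuous_snd.mul continuous_const).smul continuous_const)
    exact ((hder.comp h1).clm_apply continuous_const)
  -- a compact set containing I₁
  set K : Set (EuclideanSpace ℝ (Fin d)) := (EuclideanSpace.equiv (Fin d) ℝ).symm ''
      (Set.univ.pi fun l => Set.Icc (lam * (z l : ℝ)) (lam * (z l : ℝ) + lam)) with hKdef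
  have hK : IsCompact K :=
    ((isCompact_univ_pi fun l => isCompact_Icc).image
      (EuclideanSpace.equiv (Fin d) ℝ).symm.continuous)
  have hIK : I₁ ⊆ K := by
    intro x hx
    rw [hI₁] at hx
    refine ⟨(EuclideanSpace.equiv (Fin d) ℝ) x, ?_, by simp⟩
    intro l _
    exact ⟨(hx l).1, (hx l).2.le⟩
  -- integrability on I₁
  have hint1 : IntegrableOn φ I₁ := (hφc.continuousOn.integrableOn_compact hK).mono_set hIK
  have hint2 : IntegrableOn (fun x => φ (x + v)) I₁ :=
    (((hφc.comp (continuous_id.add continuous_const)).continuousOn.integrableOn_compact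
      hK).mono_set hIK)
  -- integrability on the product
  have hGprod : Integrable
      (Function.uncurry fun (x : EuclideanSpace ℝ (Fin d)) (t : ℝ) => (fderiv ℝ φ (x + (t * lam) • e)) e)
      ((volume.restrict I₁).prod (volume.restrict (Set.Ioc (0:ℝ) 1))) := by
    rw [Measure.prod_restrict]
    have hsub : I₁ ×ˢ Set.Ioc (0:ℝ) 1 ⊆ K ×ˢ Set.Icc (0:ℝ) 1 :=
      Set.prod_mono hIK Set.Ioc_subset_Icc_self
    exact ((hcont.continuousOn.integrableOn_compact (hK.prod isCompact_Icc)).mono_set hsub)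
  -- I₂ is the translate of I₁ by v
  have hI2img : I₂ = (fun x => x + v) '' I₁ := by
    rw [hI₁, hI₂]
    ext y
    simp only [Set.mem_setOf_eq, Set.mem_image]
    have hvl : ∀ l, v l = lam * (if l = i then 1 else 0) := by
      intro l
      simp [hv, he, EuclideanSpace.single_apply]
    constructor
    · intro h
      refine ⟨y - v, fun l => ?_, by abel⟩
      have hl := h l
      rw [mul_add] at hl
      have hyl : (y - v) l = y l - lam * (if l = i then 1 else 0) := by
        rw [PiLp.sub_apply, hvl l]
      rw [hyl]
      exact ⟨by linarith [hl.1], by linarith [hl.2]⟩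
    · rintro ⟨x, hx, rfl⟩
      intro l
      have hxl := hx l
      have hyl : (x + v) l = x l + lam * (if l = i then 1 else 0) := by
        rw [PiLp.add_apply, hvl l]
      rw [hyl, mul_add]
      exact ⟨by linarith [hxl.1], by linarith [hxl.2]⟩
  -- translation invariance
  have htrans : ∫ x in I₂, φ x = ∫ x in I₁, φ (x + v) := by
    rw [hI2img]
    exact (measurePreserving_add_right volume v).setIntegral_image_emb
      (measurableEmbedding_addRight v) φ I₁
  -- fundamental theorem of calculus along the segment
  have hdiff := hφ.differentiable one_ne_zero
  have key : ∀ x : EuclideanSpace ℝ (Fin d), φ (x + v) - φ x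
      = ∫ t in Set.Ioc (0:ℝ) 1, lam * (fderiv ℝ φ (x + (t * lam) • e)) e := by
    intro x
    have hderiv : ∀ t ∈ Set.uIcc (0:ℝ) 1,
        HasDerivAt (fun s : ℝ => φ (x + s • v)) (lam * (fderiv ℝ φ (x + (t * lam) • e)) e) t := by
      intro t _
      have hc : HasDerivAt (fun s : ℝ => x + s • v) v t := by
        simpa using ((hasDerivAt_id t).smul_const v).const_add x
      have h2 := (hdiff (x + t • v)).hasFDerivAt.comp_hasDerivAt t hc
      refine h2.congr_deriv ?_
      rw [hv, smul_smul, ContinuousLinearMap.map_smul, smul_eq_mul]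
    have hcont' : IntervalIntegrable
        (fun t : ℝ => lam * (fderiv ℝ φ (x + (t * lam) • e)) e) volume 0 1 := by
      apply Continuous.intervalIntegrable
      exact continuous_const.mul
        ((hder.comp (continuous_const.add
          ((continuous_id.mul continuous_const).smul continuous_const))).clm_apply
          continuous_const)
    have hFTC := intervalIntegral.integral_eq_sub_of_hasDerivAt hderiv hcont'
    rw [intervalIntegral.integral_of_le zero_le_one] at hFTC
    rw [hFTC]
    simp
  -- rewrite m₂ - m₁
  have hsplit : m₂ - m₁
      = lam ^ (-(d : ℤ)) * (lam * ∫ x in I₁, ∫ t in Set.Ioc (0:ℝ) 1,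
          (fderiv ℝ φ (x + (t * lam) • e)) e) := by
    rw [hm₁, hm₂, htrans, ← mul_sub, ← integral_sub hint2 hint1]
    congr 1
    rw [← integral_const_mul lam _]
    apply integral_congr_ae
    filter_upwards with x
    rw [key x, integral_const_mul lam _]
  -- Fubini
  have hswap : ∫ x in I₁, ∫ t in Set.Ioc (0:ℝ) 1, (fderiv ℝ φ (x + (t * lam) • e)) e
      = ∫ t in Set.Ioc (0:ℝ) 1, ∫ x in I₁, (fderiv ℝ φ (x + (t * lam) • e)) e :=
    integral_integral_swap hGprod
  -- bound by the integral of the absolute value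
  have hbound : |∫ t in Set.Ioc (0:ℝ) 1, ∫ x in I₁, (fderiv ℝ φ (x + (t * lam) • e)) e|
      ≤ ∫ t in Set.Ioc (0:ℝ) 1, ∫ x in I₁, |(fderiv ℝ φ (x + (t * lam) • e)) e| := by
    calc |∫ t in Set.Ioc (0:ℝ) 1, ∫ x in I₁, (fderiv ℝ φ (x + (t * lam) • e)) e|
        ≤ ∫ t in Set.Ioc (0:ℝ) 1, |∫ x in I₁, (fderiv ℝ φ (x + (t * lam) • e)) e| := by
          simpa [Real.norm_eq_abs] using norm_integral_le_integral_norm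
            (μ := volume.restrict (Set.Ioc (0:ℝ) 1))
            (fun t => ∫ x in I₁, (fderiv ℝ φ (x + (t * lam) • e)) e)
      _ ≤ ∫ t in Set.Ioc (0:ℝ) 1, ∫ x in I₁, |(fderiv ℝ φ (x + (t * lam) • e)) e| := by
          apply integral_mono hGprod.integral_prod_right.norm
            (by simpa [Real.norm_eq_abs] using hGprod.norm.integral_prod_right)
          intro t
          simpa [Real.norm_eq_abs] using norm_integral_le_integral_norm
            (μ := volume.restrict I₁)
            (fun x => (fderiv ℝ φ (x + (t * lam) • e)) e)
  -- put everything together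
  have hzpow : lam ^ ((1 : ℤ) - (d : ℤ)) = lam * lam ^ (-(d : ℤ)) := by
    rw [sub_eq_add_neg, zpow_add₀ hlam.ne', zpow_one]
  have hpos : (0:ℝ) < lam ^ (-(d : ℤ)) := zpow_pos hlam _
  calc dS1 (Complex.exp (Complex.I * m₂)) (Complex.exp (Complex.I * m₁))
      ≤ |m₂ - m₁| := hA
    _ = lam ^ (-(d : ℤ)) * (lam *
          |∫ t in Set.Ioc (0:ℝ) 1, ∫ x in I₁, (fderiv ℝ φ (x + (t * lam) • e)) e|) := by
        rw [hsplit, hswap, abs_mul, abs_mul, abs_of_pos hpos, abs_of_pos hlam]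
    _ ≤ lam ^ (-(d : ℤ)) * (lam *
          ∫ t in Set.Ioc (0:ℝ) 1, ∫ x in I₁, |(fderiv ℝ φ (x + (t * lam) • e)) e|) := by
        apply mul_le_mul_of_nonneg_left _ hpos.le
        exact mul_le_mul_of_nonneg_left hbound hlam.le
    _ = lam ^ ((1 : ℤ) - (d : ℤ)) *
          ∫ t in (0 : ℝ)..1, ∫ x in I₁, |(fderiv ℝ φ (x + (t * lam) • e)) e| := by
        rw [hzpow, intervalIntegral.integral_of_le zero_le_one]
        ring
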